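/- In any compository, the source and target conditions hold: for a $k$-composable pair $(A,B) \in \mathcal{C}(m) \times \mathcal{C}(n)$, one has $(A \circ_k B)s_m = A$ and $(A \circ_k B)t_n = B$. -/

import Mathlib

open CategoryTheory Opposite

namespace Compo

/-- The object `[n]` of the simplex category. -/
abbrev sobj (n : ℕ) : SimplexCategory := SimplexCategory.mk n

/-- The "initial face" map `s_k : [k] → [n]`, `v ↦ v`. -/
def srcHom (k n : ℕ) (h : k ≤ n) : sobj k ⟶ sobj n :=
  SimplexCategory.mkHom
    ⟨fun v => ⟨v.1, by have := v.isLt; omega⟩, fun a b hab => Fin.mk_le_mk.mpr hab⟩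

/-- The "terminal face" map `t_k : [k] → [n]`, `v ↦ v + n - k`. -/
def tgtHom (k n : ℕ) (h : k ≤ n) : sobj k ⟶ sobj n :=
  SimplexCategory.mkHom
    ⟨fun v => ⟨v.1 + (n - k), by have := v.isLt; omega⟩, fun a b hab => by
      simp only [Fin.le_def] at hab ⊢; omega⟩

/-- A compository: a simplicial set equipped with compositions of `k`-composable
pairs, satisfying the identity axiom, the back-and-forth axiom, and compatibility
with degeneracy and face maps. The dimension `N` of the composite satisfies
`m + n = N + k`. -/
structure Compository where
  X : SSet.{0}
  comp : ∀ {m n k N : ℕ} (hm : k ≤ m) (hn : k ≤ n) (_ : m + n = N + k)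
    (A : X.obj (op (sobj m))) (B : X.obj (op (sobj n))),
    X.map (tgtHom k m hm).op A = X.map (srcHom k n hn).op B → X.obj (op (sobj N))
  /-- Identity axiom: `As_k ∘_k A = A`. -/
  id_left : ∀ {m k : ℕ} (hm : k ≤ m) (A : X.obj (op (sobj m))) h,
    comp (le_refl k) hm (by omega) (X.map (srcHom k m hm).op A) A h = A
  /-- Identity axiom: `A ∘_k At_k = A`. -/
  id_right : ∀ {m k : ℕ} (hm : k ≤ m) (A : X.obj (op (sobj m))) h,
    comp hm (le_refl k) (by omega) A (X.map (tgtHom k m hm).op A) h = A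
  /-- Back-and-forth axiom: `(A ∘_k B)s_{m+i} ∘_{k+i} B = A ∘_k B` for `i ≤ n - k`. -/
  back_forth_left : ∀ {m n k N : ℕ} (hm : k ≤ m) (hn : k ≤ n) (hN : m + n = N + k)
    (i : ℕ) (hi : i ≤ n - k)
    (A : X.obj (op (sobj m))) (B : X.obj (op (sobj n)))
    (hAB : X.map (tgtHom k m hm).op A = X.map (srcHom k n hn).op B)
    (h : X.map (tgtHom (k + i) (m + i) (by omega)).op
      (X.map (srcHom (m + i) N (by omega)).op (comp hm hn hN A B hAB))
      = X.map (srcHom (k + i) n (by omega)).op B),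
    comp (show k + i ≤ m + i by omega) (show k + i ≤ n by omega)
      (show (m + i) + n = N + (k + i) by omega)
      (X.map (srcHom (m + i) N (by omega)).op (comp hm hn hN A B hAB)) B h
    = comp hm hn hN A B hAB
  /-- Back-and-forth axiom: `A ∘_{k+j} (A ∘_k B)t_{n+j} = A ∘_k B` for `j ≤ m - k`. -/
  back_forth_right : ∀ {m n k N : ℕ} (hm : k ≤ m) (hn : k ≤ n) (hN : m + n = N + k)
    (j : ℕ) (hj : j ≤ m - k)
    (A : X.obj (op (sobj m))) (B : X.obj (op (sobj n)))
    (hAB : X.map (tgtHom k m hm).op A = X.map (srcHom k n hn).op B)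
    (h : X.map (tgtHom (k + j) m (by omega)).op A
      = X.map (srcHom (k + j) (n + j) (by omega)).op
        (X.map (tgtHom (n + j) N (by omega)).op (comp hm hn hN A B hAB))),
    comp (show k + j ≤ m by omega) (show k + j ≤ n + j by omega)
      (show m + (n + j) = N + (k + j) by omega)
      A (X.map (tgtHom (n + j) N (by omega)).op (comp hm hn hN A B hAB)) h
    = comp hm hn hN A B hAB
  /-- `(A ∘_k B)η_i = Aη_i ∘_k B` for `i ≤ m - k`. -/
  comp_eta_low : ∀ {m n k N : ℕ} (hm : k ≤ m) (hn : k ≤ n) (hN : m + n = N + k)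
    (i : ℕ) (hi : i ≤ m - k)
    (A : X.obj (op (sobj m))) (B : X.obj (op (sobj n)))
    (hAB : X.map (tgtHom k m hm).op A = X.map (srcHom k n hn).op B)
    (h : X.map (tgtHom k (m + 1) (by omega)).op
      (X.map (SimplexCategory.σ (⟨i, by omega⟩ : Fin (m + 1))).op A)
      = X.map (srcHom k n hn).op B),
    X.map (SimplexCategory.σ (⟨i, by omega⟩ : Fin (N + 1))).op (comp hm hn hN A B hAB)
    = comp (show k ≤ m + 1 by omega) hn (show (m + 1) + n = (N + 1) + k by omega)
        (X.map (SimplexCategory.σ (⟨i, by omega⟩ : Fin (m + 1))).op A) B h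
  /-- `(A ∘_k B)η_i = A ∘_k Bη_{i-m+k}` for `i ≥ m`. -/
  comp_eta_high : ∀ {m n k N : ℕ} (hm : k ≤ m) (hn : k ≤ n) (hN : m + n = N + k)
    (i : ℕ) (hi1 : m ≤ i) (hi2 : i ≤ N)
    (A : X.obj (op (sobj m))) (B : X.obj (op (sobj n)))
    (hAB : X.map (tgtHom k m hm).op A = X.map (srcHom k n hn).op B)
    (h : X.map (tgtHom k m hm).op A
      = X.map (srcHom k (n + 1) (by omega)).op
        (X.map (SimplexCategory.σ (⟨i - m + k, by omega⟩ : Fin (n + 1))).op B)),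
    X.map (SimplexCategory.σ (⟨i, by omega⟩ : Fin (N + 1))).op (comp hm hn hN A B hAB)
    = comp hm (show k ≤ n + 1 by omega) (show m + (n + 1) = (N + 1) + k by omega)
        A (X.map (SimplexCategory.σ (⟨i - m + k, by omega⟩ : Fin (n + 1))).op B) h
  /-- `(A ∘_k B)η_i = Aη_i ∘_{k+1} Bη_{i-m+k}` for `m - k ≤ i ≤ m`. -/
  comp_eta_mid : ∀ {m n k N : ℕ} (hm : k ≤ m) (hn : k ≤ n) (hN : m + n = N + k)
    (i : ℕ) (hi1 : m - k ≤ i) (hi2 : i ≤ m)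
    (A : X.obj (op (sobj m))) (B : X.obj (op (sobj n)))
    (hAB : X.map (tgtHom k m hm).op A = X.map (srcHom k n hn).op B)
    (h : X.map (tgtHom (k + 1) (m + 1) (by omega)).op
      (X.map (SimplexCategory.σ (⟨i, by omega⟩ : Fin (m + 1))).op A)
      = X.map (srcHom (k + 1) (n + 1) (by omega)).op
        (X.map (SimplexCategory.σ (⟨i - m + k, by omega⟩ : Fin (n + 1))).op B)),
    X.map (SimplexCategory.σ (⟨i, by omega⟩ : Fin (N + 1))).op (comp hm hn hN A B hAB)
    = comp (show k + 1 ≤ m + 1 by omega) (show k + 1 ≤ n + 1 by omega)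
        (show (m + 1) + (n + 1) = (N + 1) + (k + 1) by omega)
        (X.map (SimplexCategory.σ (⟨i, by omega⟩ : Fin (m + 1))).op A)
        (X.map (SimplexCategory.σ (⟨i - m + k, by omega⟩ : Fin (n + 1))).op B) h
  /-- `(A ∘_k B)∂_i = A∂_i ∘_k B` for `i < m - k` (here `A` is an `(m+1)`-simplex). -/
  comp_delta_low : ∀ {m n k N : ℕ} (hm : k ≤ m + 1) (hn : k ≤ n)
    (hN : (m + 1) + n = (N + 1) + k)
    (i : ℕ) (hi : i < m + 1 - k)
    (A : X.obj (op (sobj (m + 1)))) (B : X.obj (op (sobj n)))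
    (hAB : X.map (tgtHom k (m + 1) hm).op A = X.map (srcHom k n hn).op B)
    (h : X.map (tgtHom k m (by omega)).op
      (X.map (SimplexCategory.δ (⟨i, by omega⟩ : Fin (m + 2))).op A)
      = X.map (srcHom k n hn).op B),
    X.map (SimplexCategory.δ (⟨i, by omega⟩ : Fin (N + 2))).op (comp hm hn hN A B hAB)
    = comp (show k ≤ m by omega) hn (show m + n = N + k by omega)
        (X.map (SimplexCategory.δ (⟨i, by omega⟩ : Fin (m + 2))).op A) B h
  /-- `(A ∘_k B)∂_i = A ∘_k B∂_{i-m+k}` for `i > m` (here `B` is an `(n+1)`-simplex). -/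
  comp_delta_high : ∀ {m n k N : ℕ} (hm : k ≤ m) (hn : k ≤ n + 1)
    (hN : m + (n + 1) = (N + 1) + k)
    (i : ℕ) (hi1 : m < i) (hi2 : i ≤ N + 1)
    (A : X.obj (op (sobj m))) (B : X.obj (op (sobj (n + 1))))
    (hAB : X.map (tgtHom k m hm).op A = X.map (srcHom k (n + 1) hn).op B)
    (h : X.map (tgtHom k m hm).op A
      = X.map (srcHom k n (by omega)).op
        (X.map (SimplexCategory.δ (⟨i - m + k, by omega⟩ : Fin (n + 2))).op B)),
    X.map (SimplexCategory.δ (⟨i, by omega⟩ : Fin (N + 2))).op (comp hm hn hN A B hAB)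
    = comp hm (show k ≤ n by omega) (show m + n = N + k by omega)
        A (X.map (SimplexCategory.δ (⟨i - m + k, by omega⟩ : Fin (n + 2))).op B) h

end Compo


namespace Compo

lemma srcHom_self (n : ℕ) (h : n ≤ n) : srcHom n n h = 𝟙 (sobj n) := by
  apply SimplexCategory.Hom.ext
  ext v
  simp [srcHom]
  rfl

lemma tgtHom_self (n : ℕ) (h : n ≤ n) : tgtHom n n h = 𝟙 (sobj n) := by
  apply SimplexCategory.Hom.ext
  ext v
  simp [tgtHom]

lemma srcHom_delta (k n : ℕ) (h : k ≤ n) (h' : k ≤ n + 1) (hlt : n + 1 < n + 2) :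
    srcHom k n h ≫ SimplexCategory.δ (⟨n + 1, hlt⟩ : Fin (n + 2)) = srcHom k (n + 1) h' := by
  apply SimplexCategory.Hom.ext
  ext v
  have hv := v.isLt
  simp only [SimplexCategory.len_mk] at hv
  show ((Fin.succAbove (⟨n + 1, hlt⟩ : Fin (n + 2)) ⟨v.1, _⟩ : Fin (n+2)) : ℕ) = v.1
  simp [Fin.succAbove, Fin.lt_def]
  split <;> simp only [] <;> omega

lemma tgtHom_delta (k m : ℕ) (h : k ≤ m) (h' : k ≤ m + 1) (hlt : 0 < m + 2) :
    tgtHom k m h ≫ SimplexCategory.δ (⟨0, hlt⟩ : Fin (m + 2)) = tgtHom k (m + 1) h' := by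
  apply SimplexCategory.Hom.ext
  ext v
  show ((Fin.succAbove (⟨0, hlt⟩ : Fin (m + 2)) ⟨v.1 + (m - k), by have := v.isLt; simp only [SimplexCategory.len_mk] at this; omega⟩ : Fin (m+2)) : ℕ) = v.1 + (m + 1 - k)
  simp [Fin.succAbove, Fin.lt_def]
  omega

lemma src_aux (𝒞 : Compository) (d : ℕ) :
    ∀ {m n k N : ℕ} (hm : k ≤ m) (hn : k ≤ n) (hN : m + n = N + k) (_ : n = k + d)
      (A : 𝒞.X.obj (op (sobj m))) (B : 𝒞.X.obj (op (sobj n)))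
      (hAB : 𝒞.X.map (tgtHom k m hm).op A = 𝒞.X.map (srcHom k n hn).op B)
      (hmN : m ≤ N),
      𝒞.X.map (srcHom m N hmN).op (𝒞.comp hm hn hN A B hAB) = A := by
  induction d with
  | zero =>
    intro m n k N hm hn hN hd A B hAB hmN
    subst hd
    obtain rfl : N = m := by omega
    have hB : B = 𝒞.X.map (tgtHom _ _ hm).op A := by
      rw [hAB, srcHom_self, op_id, FunctorToTypes.map_id_apply]
    subst hB
    rw [srcHom_self, op_id, FunctorToTypes.map_id_apply]
    exact 𝒞.id_right hm A hAB
  | succ d ih =>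
    intro m n k N hm hn hN hd A B hAB hmN
    obtain ⟨n', rfl⟩ : ∃ n', n = n' + 1 := ⟨k + d, by omega⟩
    obtain ⟨N', rfl⟩ : ∃ N', N = N' + 1 := ⟨m + d, by omega⟩
    have hfin : (⟨N' + 1 - m + k, by omega⟩ : Fin (n' + 2)) = ⟨n' + 1, by omega⟩ :=
      Fin.ext (by simp; omega)
    have h' : 𝒞.X.map (tgtHom k m hm).op A
        = 𝒞.X.map (srcHom k n' (by omega)).op
            (𝒞.X.map (SimplexCategory.δ (⟨N' + 1 - m + k, by omega⟩ : Fin (n' + 2))).op B) := by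
      rw [hfin, hAB, ← FunctorToTypes.map_comp_apply, ← op_comp,
        srcHom_delta k n' (by omega) hn]
    rw [show srcHom m (N' + 1) hmN
          = srcHom m N' (by omega) ≫ SimplexCategory.δ (⟨N' + 1, by omega⟩ : Fin (N' + 2)) from
        (srcHom_delta m N' (by omega) hmN (by omega)).symm,
      op_comp, FunctorToTypes.map_comp_apply,
      𝒞.comp_delta_high hm hn hN (N' + 1) (by omega) (by omega) A B hAB h']
    exact ih hm (by omega) (by omega) (by omega) A _ h' (by omega)

lemma tgt_aux (𝒞 : Compository) (d : ℕ) :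
    ∀ {m n k N : ℕ} (hm : k ≤ m) (hn : k ≤ n) (hN : m + n = N + k) (_ : m = k + d)
      (A : 𝒞.X.obj (op (sobj m))) (B : 𝒞.X.obj (op (sobj n)))
      (hAB : 𝒞.X.map (tgtHom k m hm).op A = 𝒞.X.map (srcHom k n hn).op B)
      (hnN : n ≤ N),
      𝒞.X.map (tgtHom n N hnN).op (𝒞.comp hm hn hN A B hAB) = B := by
  induction d with
  | zero =>
    intro m n k N hm hn hN hd A B hAB hnN
    subst hd
    obtain rfl : N = n := by omega
    have hA : A = 𝒞.X.map (srcHom _ _ hn).op B := by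
      rw [← hAB, tgtHom_self, op_id, FunctorToTypes.map_id_apply]
    subst hA
    rw [tgtHom_self, op_id, FunctorToTypes.map_id_apply]
    exact 𝒞.id_left hn B hAB
  | succ d ih =>
    intro m n k N hm hn hN hd A B hAB hnN
    obtain ⟨m', rfl⟩ : ∃ m', m = m' + 1 := ⟨k + d, by omega⟩
    obtain ⟨N', rfl⟩ : ∃ N', N = N' + 1 := ⟨n + d, by omega⟩
    have h' : 𝒞.X.map (tgtHom k m' (by omega)).op
          (𝒞.X.map (SimplexCategory.δ (⟨0, by omega⟩ : Fin (m' + 2))).op A)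
        = 𝒞.X.map (srcHom k n hn).op B := by
      rw [← hAB, ← FunctorToTypes.map_comp_apply, ← op_comp,
        tgtHom_delta k m' (by omega) hm]
    rw [show tgtHom n (N' + 1) hnN
          = tgtHom n N' (by omega) ≫ SimplexCategory.δ (⟨0, by omega⟩ : Fin (N' + 2)) from
        (tgtHom_delta n N' (by omega) hnN (by omega)).symm,
      op_comp, FunctorToTypes.map_comp_apply,
      𝒞.comp_delta_low hm hn hN 0 (by omega) A B hAB h']
    exact ih (by omega) hn (by omega) (by omega) _ B h' (by omega)

end Compo

open Compo in
/-- source and target conditions in a compository: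
`(A ∘_k B)s_m = A` and `(A ∘_k B)t_n = B`. -/
theorem compository_source_target (𝒞 : Compository) {m n k N : ℕ}
    (hm : k ≤ m) (hn : k ≤ n) (hN : m + n = N + k)
    (A : 𝒞.X.obj (op (sobj m))) (B : 𝒞.X.obj (op (sobj n)))
    (hAB : 𝒞.X.map (tgtHom k m hm).op A = 𝒞.X.map (srcHom k n hn).op B) :
    𝒞.X.map (srcHom m N (by omega)).op (𝒞.comp hm hn hN A B hAB) = A ∧
    𝒞.X.map (tgtHom n N (by omega)).op (𝒞.comp hm hn hN A B hAB) = B := by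
  constructor
  · exact Compo.src_aux 𝒞 (n - k) hm hn hN (by omega) A B hAB (by omega)
  · exact Compo.tgt_aux 𝒞 (m - k) hm hn hN (by omega) A B hAB (by omega)
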